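/- Let A be an (n-1)×n matrix over ℝ_max such that at least one of the tropical Cramer permanents per A_{|k)} (k ∈ [n]) is finite, where A_{|k)} is the (n-1)×(n-1) matrix obtained from A by deleting column k. Define x ∈ ℝ_max^n by x_k = per A_{|k)}. Then for every row i ∈ [n-1], the maximum max_{k∈[n]}(A_{ik} + x_k) is attained for at least two distinct indices k. Moreover, if for every k ∈ [n] the maximum per A_{|k)} is finite and is attained by a unique permutation, then every vector y ∈ ℝ_max^n, not identically −∞, such that for every row i the maximum max_{k∈[n]}(A_{ik} + y_k) is attained at least twice, satisfies y_k = λ + x_k for all k, for some constant λ ∈ ℝ. -/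

import Mathlib

open Finset

/-- The tropical Cramer permanent `per A_{|k)}` of an `m × (m+1)` matrix over `ℝ_max`:
the tropical permanent of the matrix obtained by deleting column `k`. -/
noncomputable def cramerPer {m : ℕ} (A : Matrix (Fin m) (Fin (m + 1)) (WithBot ℝ))
    (k : Fin (m + 1)) : WithBot ℝ :=
  Finset.univ.sup fun σ : Equiv.Perm (Fin m) => ∑ i, A i (k.succAbove (σ i))

lemma sum_ne_bot_iff {ι : Type*} (s : Finset ι) (f : ι → WithBot ℝ) :
    (∑ i ∈ s, f i) ≠ ⊥ ↔ ∀ i ∈ s, f i ≠ ⊥ := by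
  classical
  induction s using Finset.induction_on with
  | empty => simp
  | insert a s h ih =>
    simp [Finset.sum_insert h, WithBot.add_eq_bot, not_or, ih]

lemma coe_sum' {ι : Type*} (s : Finset ι) (f : ι → ℝ) :
    ((∑ i ∈ s, f i : ℝ) : WithBot ℝ) = ∑ i ∈ s, (f i : WithBot ℝ) := by
  classical
  induction s using Finset.induction_on with
  | empty => simp
  | insert a s h ih =>
    rw [Finset.sum_insert h, Finset.sum_insert h, WithBot.coe_add, ih]

lemma wb_eq_of_add_coe_eq {a : WithBot ℝ} {c d : ℝ} (h : a + (c : WithBot ℝ) = (d : WithBot ℝ)) :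
    a = ((d - c : ℝ) : WithBot ℝ) := by
  cases a with
  | bot => simp at h
  | coe r =>
    rw [← WithBot.coe_add, WithBot.coe_eq_coe] at h
    rw [WithBot.coe_eq_coe]; linarith

lemma wb_ge_of_add_coe_ge {a : WithBot ℝ} {c d : ℝ} (h : (d : WithBot ℝ) ≤ a + (c : WithBot ℝ)) :
    ((d - c : ℝ) : WithBot ℝ) ≤ a := by
  cases a with
  | bot => simp at h
  | coe r =>
    rw [← WithBot.coe_add, WithBot.coe_le_coe] at h
    rw [WithBot.coe_le_coe]; linarith

lemma exists_missing {m : ℕ} (f : Fin m → Fin (m + 1)) (hf : Function.Injective f) :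
    ∃ t, (∀ i, f i ≠ t) ∧ ∀ c, c ≠ t → ∃ i, f i = c := by
  classical
  have hcard : (Finset.univ.image f).card = m := by
    rw [Finset.card_image_of_injective _ hf, Finset.card_univ, Fintype.card_fin]
  have h1 : ∃ t, t ∉ Finset.univ.image f := by
    by_contra h
    push_neg at h
    have hsub : (Finset.univ : Finset (Fin (m+1))) ⊆ Finset.univ.image f := fun x _ => h x
    have := Finset.card_le_card hsub
    simp [hcard] at this
  obtain ⟨t, ht⟩ := h1
  refine ⟨t, fun i hi => ht (hi ▸ Finset.mem_image_of_mem f (Finset.mem_univ i)), ?_⟩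
  intro c hc
  by_contra h
  push_neg at h
  have hsub : Finset.univ.image f ⊆ (Finset.univ.erase t).erase c := by
    intro x hx
    obtain ⟨i, _, rfl⟩ := Finset.mem_image.mp hx
    exact Finset.mem_erase.mpr ⟨fun e => h i e, Finset.mem_erase.mpr ⟨fun e => ht (e ▸ hx), Finset.mem_univ _⟩⟩
  have hle := Finset.card_le_card hsub
  rw [hcard, Finset.card_erase_of_mem (Finset.mem_erase.mpr ⟨hc, Finset.mem_univ c⟩),
    Finset.card_erase_of_mem (Finset.mem_univ t), Finset.card_univ, Fintype.card_fin] at hle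
  omega

lemma exists_perm_of_avoid {m : ℕ} (f : Fin m → Fin (m + 1)) (hf : Function.Injective f)
    (l : Fin (m + 1)) (hl : ∀ i, f i ≠ l) :
    ∃ σ : Equiv.Perm (Fin m), ∀ i, f i = l.succAbove (σ i) := by
  classical
  have h : ∀ i, ∃ a, l.succAbove a = f i := fun i => Fin.exists_succAbove_eq (hl i)
  choose u hu using h
  have hui : Function.Injective u := by
    intro i j hij
    apply hf
    rw [← hu i, ← hu j, hij]
  obtain ⟨σ, hσ⟩ : ∃ σ : Equiv.Perm (Fin m), ∀ i, σ i = u i := by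
    exact ⟨Equiv.ofBijective u (Finite.injective_iff_bijective.mp hui), fun i => rfl⟩
  exact ⟨σ, fun i => by rw [hσ, hu]⟩

lemma rotate {m : ℕ} (f : Fin m → Fin (m + 1)) (hf : Function.Injective f)
    (t : Fin (m + 1)) (ht : ∀ i, f i ≠ t) (T : Fin m → Fin (m + 1) → Prop)
    (hT : ∀ i, ∃ j, T i j ∧ j ≠ f i) (i0 : Fin m) :
    (∃ f' : Fin m → Fin (m + 1), Function.Injective f' ∧ (∀ i, f' i = f i ∨ T i (f' i)) ∧
      T i0 (f' i0) ∧ f' i0 ≠ f i0 ∧ ∀ i, f' i ≠ f i0) ∨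
    (∃ f'' : Fin m → Fin (m + 1), Function.Injective f'' ∧ f'' ≠ f ∧
      (∀ i, f'' i = f i ∨ T i (f'' i)) ∧ ∀ i, f'' i ≠ t) := by
  classical
  choose c hc1 hc2 using hT
  -- surjectivity of f onto everything except t
  obtain ⟨t', ht'1, ht'2⟩ := exists_missing f hf
  have htt : t' = t := by
    by_contra h
    obtain ⟨i, hi⟩ := ht'2 t (Ne.symm h)  -- careful: need t ≠ t'
    exact ht i hi
  subst htt
  -- next function
  have hrange : ∀ i, c i ≠ t' → ∃ i', f i' = c i := fun i h => ht'2 (c i) h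
  set next : Fin m → Fin m := fun i => if h : c i = t' then i else (hrange i h).choose with hnext
  have hnext1 : ∀ i (h : c i ≠ t'), f (next i) = c i := by
    intro i h
    simp only [hnext, dif_neg h]
    exact (hrange i h).choose_spec
  have hnext3 : ∀ i, c i = t' → next i = i := by
    intro i h; simp only [hnext, dif_pos h]
  set j : ℕ → Fin m := fun n => next^[n] i0 with hj
  have hjsucc : ∀ n, j (n + 1) = next (j n) := by
    intro n; simp only [hj, Function.iterate_succ_apply']
  -- pigeonhole
  have hex : ∃ n, ∃ a, a < n ∧ j a = j n := by
    obtain ⟨a, b, hab, heq⟩ := Finite.exists_ne_map_eq_of_infinite j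
    rcases lt_or_gt_of_ne hab with h | h
    · exact ⟨b, a, h, heq⟩
    · exact ⟨a, b, h, heq.symm⟩
  set b := Nat.find hex with hb
  obtain ⟨a, hab, hjab⟩ := Nat.find_spec hex
  have hbmin : ∀ n, n < b → ¬∃ a, a < n ∧ j a = j n := fun n hn => Nat.find_min hex hn
  have jinj : ∀ u v, u < v → v < b → j u ≠ j v := by
    intro u v huv hvb heq
    exact hbmin v hvb ⟨u, huv, heq⟩
  by_cases hexit : ∃ e, e < b ∧ c (j e) = t'
  · -- path case
    left
    set e := Nat.find hexit with he
    obtain ⟨heb, hect⟩ := Nat.find_spec hexit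
    have hemin : ∀ d, d < e → c (j d) ≠ t' := by
      intro d hd hc'
      exact Nat.find_min hexit hd ⟨lt_trans hd heb, hc'⟩
    have hstep : ∀ d, d < e → f (j (d + 1)) = c (j d) := by
      intro d hd
      rw [hjsucc]; exact hnext1 _ (hemin d hd)
    set P : Finset (Fin m) := (Finset.range (e + 1)).image j with hP
    have hmemP : ∀ i, i ∈ P ↔ ∃ d, d ≤ e ∧ j d = i := by
      intro i
      constructor
      · intro h
        obtain ⟨d, hd, rfl⟩ := Finset.mem_image.mp h
        exact ⟨d, Nat.lt_succ_iff.mp (Finset.mem_range.mp hd), rfl⟩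
      · rintro ⟨d, hd, rfl⟩
        exact Finset.mem_image.mpr ⟨d, Finset.mem_range.mpr (Nat.lt_succ_of_le hd), rfl⟩
    have hjinjle : ∀ u v, u ≤ e → v ≤ e → j u = j v → u = v := by
      intro u v hu hv heq
      by_contra h
      rcases lt_or_gt_of_ne h with h' | h'
      · exact jinj u v h' (lt_of_le_of_lt hv heb) heq
      · exact jinj v u h' (lt_of_le_of_lt hu heb) heq.symm
    set f' : Fin m → Fin (m + 1) := fun i => if i ∈ P then c i else f i with hf'
    have hval : ∀ d, d ≤ e → f' (j d) = c (j d) := by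
      intro d hd
      simp only [hf', if_pos ((hmemP (j d)).mpr ⟨d, hd, rfl⟩)]
    have hvalout : ∀ i, i ∉ P → f' i = f i := by
      intro i hi; simp only [hf', if_neg hi]
    have hi0P : j 0 = i0 := rfl
    refine ⟨f', ?_, ?_, ?_, ?_, ?_⟩
    · -- injective
      intro i1 i2 h12
      by_cases h1 : i1 ∈ P <;> by_cases h2 : i2 ∈ P
      · obtain ⟨d1, hd1, rfl⟩ := (hmemP i1).mp h1
        obtain ⟨d2, hd2, rfl⟩ := (hmemP i2).mp h2
        rw [hval d1 hd1, hval d2 hd2] at h12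
        rcases eq_or_lt_of_le hd1 with rfl | hd1'
        · rcases eq_or_lt_of_le hd2 with rfl | hd2'
          · rfl
          · rw [hect, ← hstep d2 hd2'] at h12
            exact absurd h12.symm (ht _)
        · rcases eq_or_lt_of_le hd2 with rfl | hd2'
          · rw [hect, ← hstep d1 hd1'] at h12
            exact absurd h12 (ht _)
          · rw [← hstep d1 hd1', ← hstep d2 hd2'] at h12
            have := hjinjle _ _ (by omega) (by omega) (hf h12)
            have : d1 = d2 := by omega
            rw [this]
      · obtain ⟨d1, hd1, rfl⟩ := (hmemP i1).mp h1
        rw [hval d1 hd1, hvalout i2 h2] at h12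
        rcases eq_or_lt_of_le hd1 with rfl | hd1'
        · rw [hect] at h12; exact absurd h12.symm (ht _)
        · rw [← hstep d1 hd1'] at h12
          have : i2 = j (d1 + 1) := (hf h12).symm
          exact absurd ((hmemP i2).mpr ⟨d1 + 1, by omega, this.symm⟩) h2
      · obtain ⟨d2, hd2, rfl⟩ := (hmemP i2).mp h2
        rw [hval d2 hd2, hvalout i1 h1] at h12
        rcases eq_or_lt_of_le hd2 with rfl | hd2'
        · rw [hect] at h12; exact absurd h12 (ht _)
        · rw [← hstep d2 hd2'] at h12
          have : i1 = j (d2 + 1) := hf h12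
          exact absurd ((hmemP i1).mpr ⟨d2 + 1, by omega, this.symm⟩) h1
      · rw [hvalout i1 h1, hvalout i2 h2] at h12
        exact hf h12
    · intro i
      by_cases hi : i ∈ P
      · right; simp only [hf', if_pos hi]; exact hc1 i
      · left; exact hvalout i hi
    · have := hval 0 (Nat.zero_le e)
      rw [hi0P] at this
      rw [this]; exact hc1 i0
    · have := hval 0 (Nat.zero_le e)
      rw [hi0P] at this
      rw [this]; exact hc2 i0
    · intro i
      by_cases hi : i ∈ P
      · obtain ⟨d, hd, rfl⟩ := (hmemP i).mp hi
        rw [hval d hd]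
        rcases eq_or_lt_of_le hd with rfl | hd'
        · rw [hect]; exact fun h => (ht i0) h.symm
        · rw [← hstep d hd']
          intro h
          have : j (d + 1) = i0 := hf h
          rw [← hi0P] at this
          have := hjinjle _ _ (by omega) (Nat.zero_le e) this
          omega
      · rw [hvalout i hi]
        intro h
        have : i = i0 := hf h
        exact hi (this ▸ (hmemP i0).mpr ⟨0, Nat.zero_le e, hi0P⟩)
  · -- cycle case
    right
    push_neg at hexit
    have hstep : ∀ d, d < b → f (j (d + 1)) = c (j d) := by
      intro d hd
      rw [hjsucc]; exact hnext1 _ (hexit d hd)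
    have hne : ∀ d, d < b → next (j d) ≠ j d := by
      intro d hd heq
      have := hnext1 (j d) (hexit d hd)
      rw [heq] at this
      exact hc2 (j d) this.symm
    have hab1 : a + 1 < b := by
      rcases Nat.lt_or_ge (a+1) b with h | h
      · exact h
      · have hba : b = a + 1 := by omega
        have h3 : next (j a) = j a := by rw [← hjsucc, ← hba, ← hjab]
        exact absurd h3 (hne a hab)
    set C : Finset (Fin m) := (Finset.Ico a b).image j with hC
    have hmemC : ∀ i, i ∈ C ↔ ∃ d, a ≤ d ∧ d < b ∧ j d = i := by
      intro i
      simp only [hC, Finset.mem_image, Finset.mem_Ico]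
      constructor
      · rintro ⟨d, ⟨h1, h2⟩, rfl⟩; exact ⟨d, h1, h2, rfl⟩
      · rintro ⟨d, h1, h2, rfl⟩; exact ⟨d, ⟨h1, h2⟩, rfl⟩
    have hjinjlt : ∀ u v, u < b → v < b → j u = j v → u = v := by
      intro u v hu hv heq
      by_contra h
      rcases lt_or_gt_of_ne h with h' | h'
      · exact jinj u v h' hv heq
      · exact jinj v u h' hu heq.symm
    -- successor within cycle
    set suc : ℕ → ℕ := fun d => if d + 1 = b then a else d + 1 with hsuc
    have hsucmem : ∀ d, a ≤ d → d < b → a ≤ suc d ∧ suc d < b := by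
      intro d h1 h2
      simp only [hsuc]
      split
      · exact ⟨le_refl a, hab⟩
      · omega
    have hsucval : ∀ d, a ≤ d → d < b → c (j d) = f (j (suc d)) := by
      intro d h1 h2
      rw [← hstep d h2]
      simp only [hsuc]
      split
      · rename_i h; rw [h, hjab]
      · rfl
    have hsucinj : ∀ d1 d2, a ≤ d1 → d1 < b → a ≤ d2 → d2 < b → suc d1 = suc d2 → d1 = d2 := by
      intro d1 d2 ha1 hb1 ha2 hb2 h
      simp only [hsuc] at h
      split at h <;> split at h <;> omega
    set f'' : Fin m → Fin (m + 1) := fun i => if i ∈ C then c i else f i with hf''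
    have hval : ∀ d, a ≤ d → d < b → f'' (j d) = c (j d) := by
      intro d h1 h2
      simp only [hf'', if_pos ((hmemC (j d)).mpr ⟨d, h1, h2, rfl⟩)]
    have hvalout : ∀ i, i ∉ C → f'' i = f i := by
      intro i hi; simp only [hf'', if_neg hi]
    refine ⟨f'', ?_, ?_, ?_, ?_⟩
    · -- injective
      intro i1 i2 h12
      by_cases h1 : i1 ∈ C <;> by_cases h2 : i2 ∈ C
      · obtain ⟨d1, ha1, hb1, rfl⟩ := (hmemC i1).mp h1
        obtain ⟨d2, ha2, hb2, rfl⟩ := (hmemC i2).mp h2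
        rw [hval d1 ha1 hb1, hval d2 ha2 hb2, hsucval d1 ha1 hb1, hsucval d2 ha2 hb2] at h12
        have := hjinjlt _ _ (hsucmem d1 ha1 hb1).2 (hsucmem d2 ha2 hb2).2 (hf h12)
        have := hsucinj d1 d2 ha1 hb1 ha2 hb2 this
        rw [this]
      · obtain ⟨d1, ha1, hb1, rfl⟩ := (hmemC i1).mp h1
        rw [hval d1 ha1 hb1, hsucval d1 ha1 hb1, hvalout i2 h2] at h12
        have : i2 = j (suc d1) := (hf h12).symm
        exact absurd ((hmemC i2).mpr ⟨suc d1, (hsucmem d1 ha1 hb1).1, (hsucmem d1 ha1 hb1).2, this.symm⟩) h2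
      · obtain ⟨d2, ha2, hb2, rfl⟩ := (hmemC i2).mp h2
        rw [hval d2 ha2 hb2, hsucval d2 ha2 hb2, hvalout i1 h1] at h12
        have : i1 = j (suc d2) := hf h12
        exact absurd ((hmemC i1).mpr ⟨suc d2, (hsucmem d2 ha2 hb2).1, (hsucmem d2 ha2 hb2).2, this.symm⟩) h1
      · rw [hvalout i1 h1, hvalout i2 h2] at h12
        exact hf h12
    · -- f'' ≠ f
      intro heq
      have h1 := hval a (le_refl a) hab
      rw [congrFun heq (j a)] at h1
      exact hc2 (j a) h1.symm
    · intro i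
      by_cases hi : i ∈ C
      · right; simp only [hf'', if_pos hi]; exact hc1 i
      · left; exact hvalout i hi
    · intro i
      by_cases hi : i ∈ C
      · obtain ⟨d, h1, h2, rfl⟩ := (hmemC i).mp hi
        rw [hval d h1 h2]
        exact hexit d h2
      · rw [hvalout i hi]; exact ht i

lemma w_le_cramerPer {m : ℕ} (A : Matrix (Fin m) (Fin (m + 1)) (WithBot ℝ))
    (f : Fin m → Fin (m + 1)) (hf : Function.Injective f)
    (l : Fin (m + 1)) (hl : ∀ i, f i ≠ l) :
    ∑ i, A i (f i) ≤ cramerPer A l := by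
  obtain ⟨σ, hσ⟩ := exists_perm_of_avoid f hf l hl
  have : ∑ i, A i (f i) = ∑ i, A i (l.succAbove (σ i)) := by
    apply Finset.sum_congr rfl
    intro i _
    rw [hσ i]
  rw [this, cramerPer]
  exact Finset.le_sup (f := fun σ : Equiv.Perm (Fin m) => ∑ i, A i (l.succAbove (σ i))) (Finset.mem_univ σ)

lemma aux_part1 {m : ℕ} (A : Matrix (Fin m) (Fin (m + 1)) (WithBot ℝ)) :
    ∀ i : Fin m, ∃ k l : Fin (m + 1), k ≠ l ∧
        A i k + cramerPer A k = A i l + cramerPer A l ∧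
        ∀ j, A i j + cramerPer A j ≤ A i k + cramerPer A k := by
  classical
  intro i
  have hm : 0 < m := i.pos
  set S := Finset.univ.sup (fun j : Fin (m+1) => A i j + cramerPer A j) with hS
  have hdom : ∀ j, A i j + cramerPer A j ≤ S := fun j =>
    Finset.le_sup (f := fun j : Fin (m+1) => A i j + cramerPer A j) (Finset.mem_univ j)
  obtain ⟨k, _, hk⟩ := Finset.exists_mem_eq_sup Finset.univ
    (Finset.univ_nonempty) (fun j : Fin (m+1) => A i j + cramerPer A j)
  by_cases hSbot : S = ⊥
  · -- everything is ⊥ : pick two distinct columns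
    have h01 : (0 : Fin (m+1)) ≠ ⟨1, by omega⟩ := by
      intro h
      simpa using congrArg Fin.val h
    refine ⟨0, ⟨1, by omega⟩, h01, ?_, ?_⟩
    · have e0 := le_antisymm (le_of_le_of_eq (hdom 0) hSbot) bot_le
      have e1 := le_antisymm (le_of_le_of_eq (hdom ⟨1, by omega⟩) hSbot) bot_le
      rw [e0, e1]
    · intro j
      have := le_of_le_of_eq (hdom j) hSbot
      exact le_trans this bot_le
  · -- S attained at k, finite
    have hkS : A i k + cramerPer A k = S := hk.symm
    have hAk : A i k ≠ ⊥ ∧ cramerPer A k ≠ ⊥ := by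
      constructor <;> intro h <;> apply hSbot <;> rw [← hkS] <;> simp [h]
    -- the permutation attaining cramerPer A k
    obtain ⟨σ, _, hσ⟩ := Finset.exists_mem_eq_sup (Finset.univ : Finset (Equiv.Perm (Fin m)))
      Finset.univ_nonempty (fun σ : Equiv.Perm (Fin m) => ∑ j, A j (k.succAbove (σ j)))
    have hσ' : ∑ j, A j (k.succAbove (σ j)) = cramerPer A k := hσ.symm
    set c := k.succAbove (σ i) with hc
    have hkc : k ≠ c := (Fin.succAbove_ne k (σ i)).symm
    -- the modified injection
    set f : Fin m → Fin (m + 1) := Function.update (fun j => k.succAbove (σ j)) i k with hf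
    have hfi : f i = k := by rw [hf]; simp
    have hfj : ∀ j, j ≠ i → f j = k.succAbove (σ j) := fun j hj => by
      rw [hf]; simp [Function.update_of_ne hj]
    have hfinj : Function.Injective f := by
      intro a b hab
      by_cases ha : a = i <;> by_cases hb : b = i
      · rw [ha, hb]
      · rw [ha, hfi, hfj b hb] at hab
        exact absurd hab.symm (Fin.succAbove_ne k (σ b))
      · rw [hb, hfi, hfj a ha] at hab
        exact absurd hab (Fin.succAbove_ne k (σ a))
      · rw [hfj a ha, hfj b hb] at hab
        exact σ.injective (Fin.succAbove_right_injective hab)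
    have hfc : ∀ j, f j ≠ c := by
      intro j
      by_cases hj : j = i
      · rw [hj, hfi]; exact hkc
      · rw [hfj j hj, hc]
        intro h
        exact hj (σ.injective (Fin.succAbove_right_injective h))
    -- sum computation
    have hsumf : ∑ j, A j (f j) = A i k + ∑ j ∈ Finset.univ.erase i, A j (k.succAbove (σ j)) := by
      rw [← Finset.add_sum_erase Finset.univ (fun j => A j (f j)) (Finset.mem_univ i), hfi]
      congr 1
      apply Finset.sum_congr rfl
      intro j hj
      rw [hfj j (Finset.mem_erase.mp hj).1]
    have hsumx : ∑ j, A j (k.succAbove (σ j))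
        = A i c + ∑ j ∈ Finset.univ.erase i, A j (k.succAbove (σ j)) := by
      rw [← Finset.add_sum_erase Finset.univ (fun j => A j (k.succAbove (σ j))) (Finset.mem_univ i), hc]
    have hkey : A i c + ∑ j, A j (f j) = S := by
      rw [hsumf, ← add_assoc, add_comm (A i c) (A i k), add_assoc, ← hsumx, hσ', hkS]
    have hge : S ≤ A i c + cramerPer A c := by
      rw [← hkey]
      exact add_le_add_right (w_le_cramerPer A f hfinj c hfc) (A i c)
    refine ⟨k, c, hkc, ?_, ?_⟩
    · exact hkS.trans (le_antisymm hge (hdom c))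
    · intro j; rw [hkS]; exact hdom j

lemma pinv_some {α β : Type*} {f : α → β} {b : β} {a : α}
    (h : Function.partialInv f b = some a) : f a = b := by
  unfold Function.partialInv at h
  split at h
  · rename_i hex
    injection h with h'
    rw [← h']
    exact Classical.choose_spec hex
  · exact absurd h (by simp)

lemma pinv_none {α β : Type*} {f : α → β} {b : β}
    (h : ∀ a, f a ≠ b) : Function.partialInv f b = none := by
  unfold Function.partialInv
  exact dif_neg (fun ⟨a, ha⟩ => h a ha)

lemma permext {α β : Type*} [Fintype α] [Fintype β] [DecidableEq α]
    (u v : β → α) (hu : Function.Injective u) (hv : Function.Injective v) :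
    ∃ π : Equiv.Perm α, ∀ b, π (u b) = v b := by
  classical
  set e1 := Equiv.ofInjective u hu
  set e2 := Equiv.ofInjective v hv
  have hcard : Fintype.card (↥(Set.range u)ᶜ) = Fintype.card (↥(Set.range v)ᶜ) := by
    rw [Fintype.card_compl_set, Fintype.card_compl_set]
    congr 1
    rw [← Fintype.card_congr e1, ← Fintype.card_congr e2]
  set ec := Fintype.equivOfCardEq hcard
  refine ⟨(Equiv.Set.sumCompl (Set.range u)).symm.trans
    (((e1.symm.trans e2).sumCongr ec).trans (Equiv.Set.sumCompl (Set.range v))), ?_⟩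
  intro b
  have hmem : u b ∈ Set.range u := Set.mem_range_self b
  have h1 : (Equiv.Set.sumCompl (Set.range u)).symm (u b) = Sum.inl ⟨u b, hmem⟩ :=
    Equiv.Set.sumCompl_symm_apply_of_mem hmem
  have h3 : (⟨u b, hmem⟩ : Set.range u) = e1 b := by rw [Equiv.ofInjective_apply]
  simp only [Equiv.trans_apply, h1, Equiv.sumCongr_apply, Sum.map_inl]
  rw [h3, Equiv.symm_apply_apply]
  rw [show e2 b = ⟨v b, Set.mem_range_self b⟩ from Equiv.ofInjective_apply v hv b]
  exact Equiv.Set.sumCompl_apply_inl _ _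

lemma exists_ub {ι : Type*} [Fintype ι] (f : ι → ℝ) : ∃ K, ∀ i, f i ≤ K := by
  refine ⟨∑ j, |f j|, fun i => ?_⟩
  calc f i ≤ |f i| := le_abs_self _
    _ ≤ ∑ j, |f j| := Finset.single_le_sum (fun j _ => abs_nonneg (f j)) (Finset.mem_univ i)

lemma wb_cancel_add_left {a b : ℝ} {c : WithBot ℝ} (hc : c ≠ ⊥)
    (h : (a : WithBot ℝ) + c = (b : WithBot ℝ) + c) : a = b := by
  obtain ⟨r, hr⟩ := WithBot.ne_bot_iff_exists.mp hc
  rw [← hr, ← WithBot.coe_add, ← WithBot.coe_add, WithBot.coe_eq_coe] at h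
  linarith

lemma FIN {m : ℕ} (A : Matrix (Fin m) (Fin (m + 1)) (WithBot ℝ))
    (hu : ∀ k : Fin (m + 1), cramerPer A k ≠ ⊥ ∧
      ∃! σ : Equiv.Perm (Fin m), (∑ i, A i (k.succAbove (σ i))) = cramerPer A k)
    (y : Fin (m + 1) → ℝ)
    (hy : ∀ i : Fin m, ∃ k l : Fin (m + 1), k ≠ l ∧
      A i k + ((y k : ℝ) : WithBot ℝ) = A i l + ((y l : ℝ) : WithBot ℝ) ∧
      ∀ j, A i j + ((y j : ℝ) : WithBot ℝ) ≤ A i k + ((y k : ℝ) : WithBot ℝ)) :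
    ∃ lam : ℝ, ∀ k, ((y k : ℝ) : WithBot ℝ) = (lam : WithBot ℝ) + cramerPer A k := by
  classical
  choose σk hσk using fun k => (hu k).2
  set mk : Fin (m + 1) → Fin m → Fin (m + 1) := fun k i => k.succAbove (σk k i) with hmkdef
  have hmk_inj : ∀ k, Function.Injective (mk k) := fun k a b h =>
    (σk k).injective (Fin.succAbove_right_injective h)
  have hmk_avoid : ∀ k i, mk k i ≠ k := fun k i => Fin.succAbove_ne k (σk k i)
  have hmk_sum : ∀ k, ∑ i, A i (mk k i) = cramerPer A k := fun k => (hσk k).1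
  have hmk_ne : ∀ k i, A i (mk k i) ≠ ⊥ := by
    intro k i
    have := (sum_ne_bot_iff Finset.univ (fun i => A i (mk k i))).mp
      (by rw [hmk_sum k]; exact (hu k).1) i (Finset.mem_univ i)
    exact this
  choose xr hxr using fun k => WithBot.ne_bot_iff_exists.mp (hu k).1
  -- row maxima
  set M : Fin m → WithBot ℝ := fun i => Finset.univ.sup (fun j => A i j + ((y j : ℝ) : WithBot ℝ)) with hMdef
  have termle : ∀ i j, A i j + ((y j : ℝ) : WithBot ℝ) ≤ M i := fun i j =>
    Finset.le_sup (f := fun j => A i j + ((y j : ℝ) : WithBot ℝ)) (Finset.mem_univ j)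
  have hMne : ∀ i, M i ≠ ⊥ := by
    intro i hMi
    set c0 : Fin (m + 1) := ⟨0, Nat.succ_pos m⟩
    have h1 := termle i (mk c0 i)
    rw [hMi, le_bot_iff, WithBot.add_eq_bot] at h1
    rcases h1 with h | h
    · exact hmk_ne c0 i h
    · exact WithBot.coe_ne_bot h
  choose Mr hMr using fun i => WithBot.ne_bot_iff_exists.mp (hMne i)
  -- tightness
  set T : Fin m → Fin (m + 1) → Prop := fun i j => A i j + ((y j : ℝ) : WithBot ℝ) = M i with hTdef
  have hrow : ∀ i, ∃ k l, k ≠ l ∧ T i k ∧ T i l := by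
    intro i
    obtain ⟨k, l, hkl, heq, hdom⟩ := hy i
    have hM : M i = A i k + ((y k : ℝ) : WithBot ℝ) :=
      le_antisymm (Finset.sup_le (fun j _ => hdom j))
        (Finset.le_sup (f := fun j => A i j + ((y j : ℝ) : WithBot ℝ)) (Finset.mem_univ k))
    exact ⟨k, l, hkl, hM.symm, by rw [hTdef]; exact heq.symm.trans hM.symm⟩
  have hT' : ∀ ls i, ∃ j, T i j ∧ j ≠ mk ls i := by
    intro ls i
    obtain ⟨k, l, hkl, hk, hl⟩ := hrow i
    by_cases h : k = mk ls i
    · exact ⟨l, hl, fun e => hkl (h ▸ e ▸ rfl)⟩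
    · exact ⟨k, hk, h⟩
  -- uniqueness transfer
  have key2 : ∀ (l : Fin (m + 1)) (f : Fin m → Fin (m + 1)), Function.Injective f →
      (∀ i, f i ≠ l) → (∑ i, A i (f i) = cramerPer A l) → f = mk l := by
    intro l f hf hl hw
    obtain ⟨σ', hσ'⟩ := exists_perm_of_avoid f hf l hl
    have hsum : ∑ i, A i (l.succAbove (σ' i)) = cramerPer A l := by
      rw [← hw]
      exact Finset.sum_congr rfl (fun i _ => by rw [hσ' i])
    have := (hσk l).2 σ' hsum
    funext i
    rw [hσ' i, this]
  -- the E-sum identity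
  set Ysum : ℝ := ∑ j, y j with hYsum
  have Esum : ∀ (l : Fin (m + 1)) (f : Fin m → Fin (m + 1)), Function.Injective f →
      (∀ i, f i ≠ l) →
      ∑ i, (A i (f i) + ((y (f i) : ℝ) : WithBot ℝ))
        = (∑ i, A i (f i)) + (((Ysum - y l : ℝ)) : WithBot ℝ) := by
    intro l f hf hl
    rw [Finset.sum_add_distrib]
    congr 1
    rw [← coe_sum']
    norm_cast
    obtain ⟨σ', hσ'⟩ := exists_perm_of_avoid f hf l hl
    have h1 : ∑ i, y (f i) = ∑ i, y (l.succAbove (σ' i)) :=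
      Finset.sum_congr rfl (fun i _ => by rw [hσ' i])
    have h2 : ∑ i, y (l.succAbove (σ' i)) = ∑ i, y (l.succAbove i) :=
      Equiv.sum_comp σ' (fun i => y (l.succAbove i))
    have h3 := Fin.sum_univ_succAbove (fun j => y j) l
    rw [h1, h2]
    rw [hYsum]
    rw [h3]
    ring
  -- value of best injections
  set El : Fin (m + 1) → ℝ := fun l => xr l + (Ysum - y l) with hEl
  have hEmk : ∀ l, ∑ i, (A i (mk l i) + ((y (mk l i) : ℝ) : WithBot ℝ)) = ((El l : ℝ) : WithBot ℝ) := by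
    intro l
    rw [Esum l (mk l) (hmk_inj l) (hmk_avoid l), hmk_sum l, ← hxr l, hEl]
    push_cast
    ring_nf
  obtain ⟨ls, _, hls⟩ := Finset.exists_max_image Finset.univ El Finset.univ_nonempty
  have hls' : ∀ l, El l ≤ El ls := fun l => hls l (Finset.mem_univ l)
  have boundE : ∀ (f : Fin m → Fin (m + 1)), Function.Injective f →
      ∑ i, (A i (f i) + ((y (f i) : ℝ) : WithBot ℝ)) ≤ ((El ls : ℝ) : WithBot ℝ) := by
    intro f hf
    obtain ⟨t, ht1, _⟩ := exists_missing f hf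
    rw [Esum t f hf ht1]
    calc (∑ i, A i (f i)) + (((Ysum - y t : ℝ)) : WithBot ℝ)
        ≤ cramerPer A t + (((Ysum - y t : ℝ)) : WithBot ℝ) :=
          add_le_add (w_le_cramerPer A f hf t ht1) le_rfl
      _ = ((El t : ℝ) : WithBot ℝ) := by rw [← hxr t, hEl]; push_cast; ring_nf
      _ ≤ ((El ls : ℝ) : WithBot ℝ) := WithBot.coe_le_coe.mpr (hls' t)
  -- C1 : mk ls is tight
  have htight : ∀ i, T i (mk ls i) := by
    by_contra hcon
    push_neg at hcon
    obtain ⟨i0, hi0⟩ := hcon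
    rcases rotate (mk ls) (hmk_inj ls) ls (hmk_avoid ls) T (hT' ls) i0 with
      ⟨f', hinj, hor, hti0, hne0, _⟩ | ⟨f'', hinj, hneq, hor, havoid⟩
    · -- strict improvement, contradiction with boundE
      choose t1 ht1 using fun i => WithBot.ne_bot_iff_exists.mp
        (show A i (mk ls i) + ((y (mk ls i) : ℝ) : WithBot ℝ) ≠ ⊥ from fun h => by
          rw [WithBot.add_eq_bot] at h
          rcases h with h | h
          exacts [hmk_ne ls i h, WithBot.coe_ne_bot h])
      classical
      have ht2ex : ∃ t2 : Fin m → ℝ, ∀ i, t2 i = if f' i = mk ls i then t1 i else Mr i :=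
        ⟨fun i => if f' i = mk ls i then t1 i else Mr i, fun i => rfl⟩
      obtain ⟨t2, ht2v⟩ := ht2ex
      have ht2 : ∀ i, A i (f' i) + ((y (f' i) : ℝ) : WithBot ℝ) = ((t2 i : ℝ) : WithBot ℝ) := by
        intro i
        rw [ht2v i]
        by_cases h : f' i = mk ls i
        · rw [if_pos h, h, ht1]
        · rw [if_neg h]
          have hTi : T i (f' i) := (hor i).resolve_left h
          rw [hTi, hMr]
      have hle : ∀ i, t1 i ≤ t2 i := by
        intro i
        rw [ht2v i]
        by_cases h : f' i = mk ls i
        · rw [if_pos h]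
        · rw [if_neg h]
          have := termle i (mk ls i)
          rw [← ht1 i, ← hMr i, WithBot.coe_le_coe] at this
          exact this
      have hlt : t1 i0 < t2 i0 := by
        have h1 := termle i0 (mk ls i0)
        rw [← ht1 i0, ← hMr i0, WithBot.coe_le_coe] at h1
        have h2 : t1 i0 ≠ Mr i0 := by
          intro h
          apply hi0
          show A i0 (mk ls i0) + ((y (mk ls i0) : ℝ) : WithBot ℝ) = M i0
          rw [← hMr i0, ← h, ht1 i0]
        rw [ht2v i0, if_neg hne0]
        exact lt_of_le_of_ne h1 h2
      have hsum_lt : ∑ i, t1 i < ∑ i, t2 i :=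
        Finset.sum_lt_sum (fun i _ => hle i) ⟨i0, Finset.mem_univ i0, hlt⟩
      have e1 : ((∑ i, t1 i : ℝ) : WithBot ℝ) = ((El ls : ℝ) : WithBot ℝ) := by
        rw [coe_sum', ← hEmk ls]
        exact Finset.sum_congr rfl (fun i _ => ht1 i)
      have e2 : ((∑ i, t2 i : ℝ) : WithBot ℝ) ≤ ((El ls : ℝ) : WithBot ℝ) := by
        rw [coe_sum']
        calc ∑ i, ((t2 i : ℝ) : WithBot ℝ) = ∑ i, (A i (f' i) + ((y (f' i) : ℝ) : WithBot ℝ)) :=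
              Finset.sum_congr rfl (fun i _ => (ht2 i).symm)
          _ ≤ ((El ls : ℝ) : WithBot ℝ) := boundE f' hinj
      rw [WithBot.coe_eq_coe] at e1
      rw [WithBot.coe_le_coe] at e2
      linarith
    · -- second optimal injection, contradiction with uniqueness
      have hterm : ∀ i, A i (mk ls i) + ((y (mk ls i) : ℝ) : WithBot ℝ)
          ≤ A i (f'' i) + ((y (f'' i) : ℝ) : WithBot ℝ) := by
        intro i
        rcases hor i with h | h
        · rw [h]
        · rw [h]; exact termle i (mk ls i)
      have hsum_ge : ((El ls : ℝ) : WithBot ℝ) ≤ ∑ i, (A i (f'' i) + ((y (f'' i) : ℝ) : WithBot ℝ)) := by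
        rw [← hEmk ls]
        exact Finset.sum_le_sum (fun i _ => hterm i)
      rw [Esum ls f'' hinj havoid] at hsum_ge
      have hge := wb_ge_of_add_coe_ge hsum_ge
      have : ((xr ls : ℝ) : WithBot ℝ) ≤ ∑ i, A i (f'' i) := by
        have heq : El ls - (Ysum - y ls) = xr ls := by rw [hEl]; ring
        rw [← heq]; exact hge
      rw [hxr ls] at this
      have hle2 := w_le_cramerPer A f'' hinj ls havoid
      exact hneq (key2 ls f'' hinj havoid (le_antisymm hle2 this))
  -- value of M-sum
  have hSumM : ((El ls : ℝ) : WithBot ℝ) = ∑ i, M i := by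
    rw [← hEmk ls]
    exact Finset.sum_congr rfl (fun i _ => htight i)
  have hSumMr : El ls = ∑ i, Mr i := by
    have : ((∑ i, Mr i : ℝ) : WithBot ℝ) = ∑ i, M i := by
      rw [coe_sum']
      exact Finset.sum_congr rfl (fun i _ => hMr i)
    rw [← this] at hSumM
    exact WithBot.coe_eq_coe.mp hSumM
  -- C2: all El equal
  have hC2 : ∀ l, El l = El ls := by
    intro l
    by_cases hlls : l = ls
    · rw [hlls]
    · -- find i0 with mk ls i0 = l
      obtain ⟨t, ht1, ht2⟩ := exists_missing (mk ls) (hmk_inj ls)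
      have htls : t = ls := by
        by_contra h
        obtain ⟨i, hi⟩ := ht2 ls (fun e => h e.symm)
        exact hmk_avoid ls i hi
      obtain ⟨i0, hi0⟩ := ht2 l (fun e => hlls (e.trans htls))
      rcases rotate (mk ls) (hmk_inj ls) ls (hmk_avoid ls) T (hT' ls) i0 with
        ⟨f', hinj, hor, _, _, havoidl⟩ | ⟨f'', hinj, hneq, hor, havoid⟩
      · -- tight injection avoiding l
        have htf : ∀ i, T i (f' i) := by
          intro i
          rcases hor i with h | h
          · rw [h]; exact htight i
          · exact h
        have havl : ∀ i, f' i ≠ l := by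
          intro i
          rw [← hi0]
          exact havoidl i
        have hEf : ∑ i, (A i (f' i) + ((y (f' i) : ℝ) : WithBot ℝ)) = ((El ls : ℝ) : WithBot ℝ) := by
          rw [hSumM]
          exact Finset.sum_congr rfl (fun i _ => htf i)
        rw [Esum l f' hinj havl] at hEf
        have hwf : ∑ i, A i (f' i) = ((El ls - (Ysum - y l) : ℝ) : WithBot ℝ) :=
          wb_eq_of_add_coe_eq hEf
        have hle2 := w_le_cramerPer A f' hinj l havl
        rw [hwf, ← hxr l, WithBot.coe_le_coe] at hle2
        have : El ls ≤ El l := by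
          have e3 : El l = xr l + (Ysum - y l) := rfl
          linarith
        exact le_antisymm (hls' l) this
      · -- same contradiction as before
        have htf : ∀ i, T i (f'' i) := by
          intro i
          rcases hor i with h | h
          · rw [h]; exact htight i
          · exact h
        have hEf : ∑ i, (A i (f'' i) + ((y (f'' i) : ℝ) : WithBot ℝ)) = ((El ls : ℝ) : WithBot ℝ) := by
          rw [hSumM]
          exact Finset.sum_congr rfl (fun i _ => htf i)
        rw [Esum ls f'' hinj havoid] at hEf
        have hwf : ∑ i, A i (f'' i) = ((El ls - (Ysum - y ls) : ℝ) : WithBot ℝ) :=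
          wb_eq_of_add_coe_eq hEf
        have heq : El ls - (Ysum - y ls) = xr ls := by rw [hEl]; ring
        rw [heq, hxr ls] at hwf
        exact absurd (key2 ls f'' hinj havoid hwf) hneq
  -- conclusion
  refine ⟨Ysum - ∑ i, Mr i, ?_⟩
  intro k
  have h1 : El k = ∑ i, Mr i := (hC2 k).trans hSumMr
  rw [← hxr k, ← WithBot.coe_add, WithBot.coe_eq_coe]
  rw [hEl] at h1
  dsimp only at h1
  linarith

/-- The vector of tropical Cramer permanents `x_k = per A_{|k)}` makes the maximum
`max_k (A_{ik} + x_k)` be attained at least twice in every row; moreover, if every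
`per A_{|k)}` is finite and attained by a unique permutation, this vector is the unique
such vector up to an additive real constant. -/
theorem stmt17 (m : ℕ) (A : Matrix (Fin m) (Fin (m + 1)) (WithBot ℝ))
    (hfin : ∃ k, cramerPer A k ≠ ⊥) :
    (∀ i : Fin m, ∃ k l : Fin (m + 1), k ≠ l ∧
        A i k + cramerPer A k = A i l + cramerPer A l ∧
        ∀ j, A i j + cramerPer A j ≤ A i k + cramerPer A k) ∧
    ((∀ k : Fin (m + 1), cramerPer A k ≠ ⊥ ∧
        ∃! σ : Equiv.Perm (Fin m), (∑ i, A i (k.succAbove (σ i))) = cramerPer A k) →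
      ∀ y : Fin (m + 1) → WithBot ℝ, (∃ k, y k ≠ ⊥) →
        (∀ i : Fin m, ∃ k l : Fin (m + 1), k ≠ l ∧
          A i k + y k = A i l + y l ∧ ∀ j, A i j + y j ≤ A i k + y k) →
        ∃ lam : ℝ, ∀ k, y k = (lam : WithBot ℝ) + cramerPer A k) := by
  classical
  refine ⟨aux_part1 A, ?_⟩
  intro hu y hy0 hy
  by_cases hfinY : ∀ j, y j ≠ ⊥
  · -- finite case: apply FIN directly
    choose yr hyr using fun j => WithBot.ne_bot_iff_exists.mp (hfinY j)
    obtain ⟨lam, hlam⟩ := FIN A hu yr (by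
      intro i
      obtain ⟨k, l, h1, h2, h3⟩ := hy i
      exact ⟨k, l, h1, by rw [hyr, hyr]; exact h2, fun j => by rw [hyr, hyr]; exact h3 j⟩)
    exact ⟨lam, fun k => by rw [← hyr k]; exact hlam k⟩
  · exfalso
    push_neg at hfinY
    obtain ⟨j1, hj1⟩ := hfinY
    obtain ⟨j0, hj0⟩ := hy0
    -- optimal permutations of A
    choose σk hσk using fun k => (hu k).2
    set mk : Fin (m + 1) → Fin m → Fin (m + 1) := fun k i => k.succAbove (σk k i) with hmkdef
    have hmk_inj : ∀ k, Function.Injective (mk k) := fun k a b h =>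
      (σk k).injective (Fin.succAbove_right_injective h)
    have hmk_avoid : ∀ k i, mk k i ≠ k := fun k i => Fin.succAbove_ne k (σk k i)
    have hmk_sum : ∀ k, ∑ i, A i (mk k i) = cramerPer A k := fun k => (hσk k).1
    have hmk_ne : ∀ k i, A i (mk k i) ≠ ⊥ := fun k i =>
      (sum_ne_bot_iff Finset.univ (fun i => A i (mk k i))).mp
        (by rw [hmk_sum k]; exact (hu k).1) i (Finset.mem_univ i)
    -- bot columns and dead rows
    set G : Finset (Fin (m + 1)) := Finset.univ.filter (fun j => y j = ⊥) with hGdef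
    have hj1G : j1 ∈ G := Finset.mem_filter.mpr ⟨Finset.mem_univ _, hj1⟩
    have hj0G : j0 ∉ G := fun h => hj0 (Finset.mem_filter.mp h).2
    have hmemG : ∀ j, j ∈ G ↔ y j = ⊥ := fun j =>
      ⟨fun h => (Finset.mem_filter.mp h).2, fun h => Finset.mem_filter.mpr ⟨Finset.mem_univ _, h⟩⟩
    set M : Fin m → WithBot ℝ := fun i => Finset.univ.sup (fun j => A i j + y j) with hMdef
    have termle : ∀ i j, A i j + y j ≤ M i := fun i j =>
      Finset.le_sup (f := fun j => A i j + y j) (Finset.mem_univ j)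
    set Dset : Finset (Fin m) := Finset.univ.filter (fun i => M i = ⊥) with hDdef
    have hmemD : ∀ i, i ∈ Dset ↔ M i = ⊥ := fun i =>
      ⟨fun h => (Finset.mem_filter.mp h).2, fun h => Finset.mem_filter.mpr ⟨Finset.mem_univ _, h⟩⟩
    have hdead1 : ∀ i ∈ Dset, ∀ j, j ∉ G → A i j = ⊥ := by
      intro i hi j hj
      have h1 := termle i j
      rw [(hmemD i).mp hi, le_bot_iff, WithBot.add_eq_bot] at h1
      rcases h1 with h | h
      · exact h
      · exact absurd ((hmemG j).mpr h) hj
    have hdeadG : ∀ i ∈ Dset, ∀ l, mk l i ∈ G := by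
      intro i hi l
      by_contra h
      exact hmk_ne l i (hdead1 i hi (mk l i) h)
    -- counting
    have hDcard : Dset.card ≤ G.card - 1 := by
      have h1 : Dset.card ≤ (G.erase j1).card := by
        apply Finset.card_le_card_of_injOn (fun i => mk j1 i)
        · intro i hi
          exact Finset.mem_erase.mpr ⟨hmk_avoid j1 i, hdeadG i hi j1⟩
        · intro a _ b _ h
          exact hmk_inj j1 h
      rw [Finset.card_erase_of_mem hj1G] at h1
      exact h1
    obtain ⟨g', hg'⟩ : ∃ g', G.card = g' + 1 := by
      have : 0 < G.card := Finset.card_pos.mpr ⟨j1, hj1G⟩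
      exact ⟨G.card - 1, by omega⟩
    have hDcard' : Dset.card ≤ g' := by omega
    set e := G.orderIsoOfFin hg' with hedef
    set colOf : Fin (g' + 1) → Fin (m + 1) := fun c => (e c : Fin (m + 1)) with hcolOf
    have hcolG : ∀ c, colOf c ∈ G := fun c => (e c).2
    have hcolInj : Function.Injective colOf := fun c1 c2 h =>
      e.injective (Subtype.ext h)
    have hcs : ∀ j (h : j ∈ G), colOf (e.symm ⟨j, h⟩) = j := by
      intro j h
      rw [hcolOf]
      simp
    -- the embedding of dead rows
    obtain ⟨emb⟩ : Nonempty ({i // i ∈ Dset} ↪ Fin g') := by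
      apply Function.Embedding.nonempty_of_card_le
      rw [Fintype.card_coe, Fintype.card_fin]
      exact hDcard'
    -- padded matrix
    set B' : Matrix (Fin g') (Fin (g' + 1)) (WithBot ℝ) := fun r c =>
      (Function.partialInv (⇑emb) r).elim (0 : WithBot ℝ) (fun i => A i.1 (colOf c)) with hB'def
    have hB'dead : ∀ (i : {i // i ∈ Dset}) c, B' (emb i) c = A i.1 (colOf c) := by
      intro i c
      rw [hB'def]
      simp only [Function.partialInv_left emb.injective i, Option.elim]
    have hB'zero : ∀ r, (∀ i : {i // i ∈ Dset}, emb i ≠ r) → ∀ c, B' r c = 0 := by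
      intro r hr c
      rw [hB'def]
      simp only [pinv_none hr, Option.elim]
    -- all Cramer permanents of B' are finite
    have hfinB : ∀ k : Fin (g' + 1), cramerPer B' k ≠ ⊥ := by
      intro k
      -- column indices of mk (colOf k) images of dead rows
      have hx : ∀ i : {i // i ∈ Dset}, ∃ z : Fin g',
          k.succAbove z = e.symm ⟨mk (colOf k) i.1, hdeadG i.1 i.2 (colOf k)⟩ := by
        intro i
        apply Fin.exists_succAbove_eq
        intro hcontra
        apply hmk_avoid (colOf k) i.1
        have := congrArg colOf hcontra.symm
        rw [hcs _ (hdeadG i.1 i.2 (colOf k))] at this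
        exact this.symm
      choose φ hφ using hx
      have hφinj : Function.Injective φ := by
        intro a b h
        have h2 : k.succAbove (φ a) = k.succAbove (φ b) := by rw [h]
        rw [hφ a, hφ b] at h2
        have h3 := e.symm.injective h2
        have h4 : mk (colOf k) a.1 = mk (colOf k) b.1 := congrArg Subtype.val h3
        exact Subtype.ext (hmk_inj (colOf k) h4)
      obtain ⟨π, hπ⟩ := permext (⇑emb) φ emb.injective hφinj
      have hterm : ∀ r, B' r (k.succAbove (π r)) ≠ ⊥ := by
        intro r
        by_cases hr : ∃ i : {i // i ∈ Dset}, emb i = r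
        · obtain ⟨i, rfl⟩ := hr
          rw [hB'dead i, hπ i, hφ i, hcs _ (hdeadG i.1 i.2 (colOf k))]
          exact hmk_ne (colOf k) i.1
        · push_neg at hr
          rw [hB'zero r hr]
          exact WithBot.coe_ne_bot
      intro hbot
      have hle : ∑ r, B' r (k.succAbove (π r)) ≤ cramerPer B' k := by
        rw [cramerPer]
        exact Finset.le_sup (f := fun σ : Equiv.Perm (Fin g') =>
          ∑ r, B' r (k.succAbove (σ r))) (Finset.mem_univ π)
      rw [hbot, le_bot_iff] at hle
      exact (sum_ne_bot_iff Finset.univ _).mpr (fun r _ => hterm r) hle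
    choose ar har using fun c => WithBot.ne_bot_iff_exists.mp (hfinB c)
    -- part 1 applied to B'
    have hpart1B := aux_part1 B'
    -- the bound function and K
    set cIdxF : Fin (m + 1) → Fin (g' + 1) := fun j =>
      if h : j ∈ G then e.symm ⟨j, h⟩ else ⟨0, Nat.succ_pos g'⟩ with hcIdxF
    set bnd : Fin m × Fin (m + 1) → ℝ := fun p =>
      (A p.1 p.2).unbotD 0 + ar (cIdxF p.2) - (M p.1).unbotD 0 with hbnd
    obtain ⟨K0, hK0⟩ := exists_ub bnd
    -- the perturbed solution for a given large K
    have main : ∀ K : ℝ, (∀ p, bnd p ≤ K) →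
        ∃ lam : ℝ, (∀ j (h : j ∉ G), y j = (lam : WithBot ℝ) + cramerPer A j) ∧
          (∀ j (h : j ∈ G), ((ar (e.symm ⟨j, h⟩) - K : ℝ) : WithBot ℝ)
            = (lam : WithBot ℝ) + cramerPer A j) := by
      intro K hK
      set yK : Fin (m + 1) → ℝ := fun j =>
        if h : j ∈ G then ar (e.symm ⟨j, h⟩) - K else (y j).unbot (fun hb => h ((hmemG j).mpr hb))
        with hyK
      have hyKG : ∀ j (h : j ∈ G), (yK j : ℝ) = ar (e.symm ⟨j, h⟩) - K := by
        intro j h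
        rw [hyK]
        simp only [dif_pos h]
      have hyKF : ∀ j (h : j ∉ G), ((yK j : ℝ) : WithBot ℝ) = y j := by
        intro j h
        rw [hyK]
        simp only [dif_neg h]
        exact WithBot.coe_unbot _ _
      -- hypothesis of FIN for yK
      have hyhyp : ∀ i : Fin m, ∃ k l : Fin (m + 1), k ≠ l ∧
          A i k + ((yK k : ℝ) : WithBot ℝ) = A i l + ((yK l : ℝ) : WithBot ℝ) ∧
          ∀ j, A i j + ((yK j : ℝ) : WithBot ℝ) ≤ A i k + ((yK k : ℝ) : WithBot ℝ) := by
        intro i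
        by_cases hMi : M i = ⊥
        · -- dead row
          have hiD : i ∈ Dset := (hmemD i).mpr hMi
          obtain ⟨kB, lB, hne, heq, hdom⟩ := hpart1B (emb ⟨i, hiD⟩)
          have hval : ∀ c : Fin (g' + 1), A i (colOf c) + ((yK (colOf c) : ℝ) : WithBot ℝ)
              = (B' (emb ⟨i, hiD⟩) c + cramerPer B' c) + ((-K : ℝ) : WithBot ℝ) := by
            intro c
            have h2 : e.symm ⟨colOf c, hcolG c⟩ = c := by
              have h2a : (⟨colOf c, hcolG c⟩ : {x // x ∈ G}) = e c := Subtype.ext rfl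
              rw [h2a, OrderIso.symm_apply_apply]
            have h1 : yK (colOf c) = ar c - K := by rw [hyKG _ (hcolG c), h2]
            have h3 : B' (emb ⟨i, hiD⟩) c = A i (colOf c) := hB'dead ⟨i, hiD⟩ c
            have h4 : ((ar c - K : ℝ) : WithBot ℝ) = cramerPer B' c + ((-K : ℝ) : WithBot ℝ) := by
              rw [← har c, ← WithBot.coe_add, WithBot.coe_eq_coe]
              ring
            rw [h1, h4, h3, ← add_assoc]
          refine ⟨colOf kB, colOf lB, fun h => hne (hcolInj h), ?_, ?_⟩
          · rw [hval kB, hval lB, heq]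
          · intro j
            by_cases hj : j ∈ G
            · have h5 := hval (e.symm ⟨j, hj⟩)
              rw [hcs j hj] at h5
              rw [h5, hval kB]
              exact add_le_add (hdom (e.symm ⟨j, hj⟩)) le_rfl
            · have hA : A i j = ⊥ := hdead1 i hiD j hj
              rw [hA, WithBot.bot_add]
              exact bot_le
        · -- alive row
          obtain ⟨k, l, hkl, heq, hdom⟩ := hy i
          have hMk : M i = A i k + y k :=
            le_antisymm (Finset.sup_le fun j _ => hdom j) (termle i k)
          have hyk : y k ≠ ⊥ := fun h => hMi (by rw [hMk, h, WithBot.add_bot])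
          have hkG : k ∉ G := fun h => hyk ((hmemG k).mp h)
          have hyl : y l ≠ ⊥ := fun h => hMi (by rw [hMk, heq, h, WithBot.add_bot])
          have hlG : l ∉ G := fun h => hyl ((hmemG l).mp h)
          refine ⟨k, l, hkl, ?_, ?_⟩
          · rw [hyKF k hkG, hyKF l hlG]
            exact heq
          · intro j
            by_cases hj : j ∈ G
            · rw [hyKF k hkG, ← hMk]
              by_cases hA : A i j = ⊥
              · rw [hA, WithBot.bot_add]
                exact bot_le
              · obtain ⟨a, ha⟩ := WithBot.ne_bot_iff_exists.mp hA
                obtain ⟨mi, hmi⟩ := WithBot.ne_bot_iff_exists.mp hMi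
                rw [hyKG j hj, ← ha, ← hmi, ← WithBot.coe_add, WithBot.coe_le_coe]
                have hb : (A i j).unbotD 0 + ar (cIdxF j) - (M i).unbotD 0 ≤ K := hK ⟨i, j⟩
                have h6 : (A i j).unbotD 0 = a := by rw [← ha]; rfl
                have h7 : (M i).unbotD 0 = mi := by rw [← hmi]; rfl
                have h8 : cIdxF j = e.symm ⟨j, hj⟩ := by
                  show (if h : j ∈ G then e.symm ⟨j, h⟩ else ⟨0, Nat.succ_pos g'⟩) = e.symm ⟨j, hj⟩
                  rw [dif_pos hj]
                rw [h6, h7, h8] at hb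
                linarith
            · rw [hyKF j hj, hyKF k hkG]
              exact hdom j
      obtain ⟨lam, hlam⟩ := FIN A hu yK hyhyp
      refine ⟨lam, ?_, ?_⟩
      · intro j h
        rw [← hyKF j h]
        exact hlam j
      · intro j h
        have := hlam j
        rw [show ((yK j : ℝ) : WithBot ℝ) = ((ar (e.symm ⟨j, h⟩) - K : ℝ) : WithBot ℝ) from by
          rw [hyKG j h]] at this
        exact this
    have hK1 : ∀ p, bnd p ≤ K0 := hK0
    have hK2 : ∀ p, bnd p ≤ K0 + 1 := fun p => le_trans (hK0 p) (by linarith)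
    obtain ⟨lam1, hlam1F, hlam1G⟩ := main K0 hK1
    obtain ⟨lam2, hlam2F, hlam2G⟩ := main (K0 + 1) hK2
    -- lam1 = lam2 from column j0
    have hx0 : cramerPer A j0 ≠ ⊥ := (hu j0).1
    have hll : lam1 = lam2 := by
      have h1 := hlam1F j0 hj0G
      have h2 := hlam2F j0 hj0G
      have h3 : (lam1 : WithBot ℝ) + cramerPer A j0 = (lam2 : WithBot ℝ) + cramerPer A j0 := by
        rw [← h1, ← h2]
      exact wb_cancel_add_left hx0 h3
    -- contradiction from column j1
    have h1 := hlam1G j1 hj1G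
    have h2 := hlam2G j1 hj1G
    rw [← hll] at h2
    rw [← h1] at h2
    rw [WithBot.coe_eq_coe] at h2
    linarith
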